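/- arXiv:1308.4347 — 8 statements merged into one kernel-verified Lean document; each statement's English description precedes it below -/
import Mathlib

section
/- Let n ≥ 1 and let K be a nonempty compact convex subset of the Euclidean space ℝ^{n+1}. Then there is a point c ∈ ℝ^{n+1} such that K is contained in the closed ball with centre c and radius w_max/√2, where w_max is the maximal width of K; in other words, the circumradius of K satisfies r_out ≤ w_max/√2. -/
open Metric
open scoped RealInnerProductSpace

set_option maxHeartbeats 1000000 in
/-- For a nonempty compact convex set `K` in Euclidean space `ℝ^{n+1}`, the
circumradius of `K` is at most `w_max / √2`, where `w_max` is the maximal width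
of `K`, i.e. the supremum over unit vectors `z` of `S z + S (-z)` for the
support function `S`. -/
theorem circumradius_le_maxWidth_div_sqrt_two
    (n : ℕ) (hn : 1 ≤ n)
    (K : Set (EuclideanSpace ℝ (Fin (n + 1))))
    (hKne : K.Nonempty) (hKcp : IsCompact K) (hKcv : Convex ℝ K)
    (S : EuclideanSpace ℝ (Fin (n + 1)) → ℝ)
    (hS : ∀ z, S z = sSup ((fun x => (inner ℝ x z : ℝ)) '' K))
    (wmax : ℝ)
    (hw : wmax = sSup ((fun z => S z + S (-z)) ''
      {z : EuclideanSpace ℝ (Fin (n + 1)) | ‖z‖ = 1})) :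
    ∃ c : EuclideanSpace ℝ (Fin (n + 1)),
      K ⊆ closedBall c (wmax / Real.sqrt 2) := by
  obtain ⟨x₀, hx₀⟩ := hKne
  obtain ⟨M, hM⟩ := isBounded_iff_forall_norm_le.1 hKcp.isBounded
  have hdc : ∀ c : EuclideanSpace ℝ (Fin (n + 1)),
      Continuous fun x : EuclideanSpace ℝ (Fin (n + 1)) => dist c x :=
    fun c => continuous_const.dist continuous_id
  -- support function facts
  have hSz : ∀ (z : EuclideanSpace ℝ (Fin (n + 1))), ∀ x ∈ K, ⟪x, z⟫ ≤ S z := by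
    intro z x hx
    rw [hS]
    refine le_csSup ?_ ⟨x, hx, rfl⟩
    exact (hKcp.image (Continuous.inner continuous_id continuous_const)).bddAbove
  have hSM : ∀ z : EuclideanSpace ℝ (Fin (n + 1)), ‖z‖ = 1 → S z ≤ M := by
    intro z hz
    rw [hS]
    refine csSup_le (Set.Nonempty.image _ ⟨x₀, hx₀⟩) ?_
    rintro _ ⟨x, hx, rfl⟩
    calc ⟪x, z⟫ ≤ ‖x‖ * ‖z‖ := real_inner_le_norm x z
    _ ≤ M := by rw [hz, mul_one]; exact hM x hx
  have hBdd : BddAbove ((fun z : EuclideanSpace ℝ (Fin (n + 1)) => S z + S (-z)) ''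
      {z : EuclideanSpace ℝ (Fin (n + 1)) | ‖z‖ = 1}) := by
    refine ⟨M + M, ?_⟩
    rintro _ ⟨z, hz, rfl⟩
    have hz1 : ‖z‖ = 1 := hz
    have hz' : ‖(-z : EuclideanSpace ℝ (Fin (n + 1)))‖ = 1 := by rwa [norm_neg]
    exact add_le_add (hSM z hz1) (hSM (-z) hz')
  have hwmem : ∀ z : EuclideanSpace ℝ (Fin (n + 1)), ‖z‖ = 1 → S z + S (-z) ≤ wmax := by
    intro z hz
    rw [hw]
    exact le_csSup hBdd ⟨z, hz, rfl⟩
  have hw0 : 0 ≤ wmax := by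
    have hz₀ : ‖(EuclideanSpace.single (0 : Fin (n+1)) (1 : ℝ))‖ = 1 := by
      rw [EuclideanSpace.norm_single]; norm_num
    have h1 := hSz (EuclideanSpace.single (0 : Fin (n+1)) (1 : ℝ)) x₀ hx₀
    have h2 := hSz (-(EuclideanSpace.single (0 : Fin (n+1)) (1 : ℝ))) x₀ hx₀
    have h3 := hwmem _ hz₀
    rw [inner_neg_right] at h2
    linarith
  -- diameter bound
  have hdiam : ∀ x ∈ K, ∀ y ∈ K, dist x y ≤ wmax := by
    intro x hx y hy
    rcases eq_or_ne x y with rfl | hne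
    · simpa using hw0
    · have hxy : (0:ℝ) < ‖x - y‖ := by
        rw [norm_pos_iff, sub_ne_zero]; exact hne
      set z : EuclideanSpace ℝ (Fin (n + 1)) := ‖x - y‖⁻¹ • (x - y) with hzdef
      have hz : ‖z‖ = 1 := by
        rw [hzdef, norm_smul, norm_inv, norm_norm, inv_mul_cancel₀ hxy.ne']
      have h1 : ⟪x - y, z⟫ = ‖x - y‖ := by
        rw [hzdef, real_inner_smul_right, real_inner_self_eq_norm_sq, pow_two,
          ← mul_assoc, inv_mul_cancel₀ hxy.ne', one_mul]
      have h2 : ⟪x, z⟫ + ⟪y, -z⟫ = ⟪x - y, z⟫ := by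
        rw [inner_neg_right, inner_sub_left]; ring
      have key : dist x y = ⟪x, z⟫ + ⟪y, -z⟫ := by
        rw [dist_eq_norm, h2, h1]
      rw [key]
      calc ⟪x, z⟫ + ⟪y, -z⟫ ≤ S z + S (-z) :=
        add_le_add (hSz z x hx) (hSz (-z) y hy)
      _ ≤ wmax := hwmem z hz
  -- the farthest-distance function
  set f : EuclideanSpace ℝ (Fin (n + 1)) → ℝ :=
    fun c => sSup ((fun x => dist c x) '' K) with hfdef
  have hfmem : ∀ c : EuclideanSpace ℝ (Fin (n + 1)), ∀ x ∈ K, dist c x ≤ f c := by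
    intro c x hx
    exact le_csSup ((hKcp.image (hdc c)).bddAbove) ⟨x, hx, rfl⟩
  have hfle : ∀ (c : EuclideanSpace ℝ (Fin (n + 1))) (b : ℝ),
      (∀ x ∈ K, dist c x ≤ b) → f c ≤ b := by
    intro c b hb
    refine csSup_le (Set.Nonempty.image _ ⟨x₀, hx₀⟩) ?_
    rintro _ ⟨x, hx, rfl⟩
    exact hb x hx
  have hfcont : Continuous f := by
    refine (LipschitzWith.of_le_add ?_).continuous
    intro c c'
    refine hfle c (f c' + dist c c') ?_
    intro x hx
    calc dist c x ≤ dist c c' + dist c' x := dist_triangle _ _ _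
    _ ≤ dist c c' + f c' := by linarith [hfmem c' x hx]
    _ = f c' + dist c c' := by ring
  have hf0 : 0 ≤ f x₀ := le_trans (by simp) (hfmem x₀ x₀ hx₀)
  -- minimize f on a large ball
  obtain ⟨c₀, hc₀B, hc₀min⟩ := (isCompact_closedBall x₀ (f x₀)).exists_isMinOn
    ⟨x₀, mem_closedBall_self hf0⟩ hfcont.continuousOn
  have hglobal : ∀ p : EuclideanSpace ℝ (Fin (n + 1)), f c₀ ≤ f p := by
    intro p
    by_cases hp : p ∈ closedBall x₀ (f x₀)
    · exact hc₀min hp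
    · have h1 : f x₀ < dist p x₀ := by
        simpa [mem_closedBall] using hp
      have h2 : dist p x₀ ≤ f p := hfmem p x₀ hx₀
      have h3 : f c₀ ≤ f x₀ := hc₀min (mem_closedBall_self hf0)
      linarith
  set r : ℝ := f c₀ with hrdef
  by_cases hcase : r ≤ wmax / Real.sqrt 2
  · refine ⟨c₀, fun x hx => ?_⟩
    rw [mem_closedBall, dist_comm]
    exact le_trans (hfmem c₀ x hx) hcase
  · exfalso
    push_neg at hcase
    have hs2 : (0:ℝ) < Real.sqrt 2 := Real.sqrt_pos.2 (by norm_num)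
    have hs2sq : Real.sqrt 2 ^ 2 = 2 := Real.sq_sqrt (by norm_num)
    have hr0 : 0 < r := lt_of_le_of_lt (div_nonneg hw0 hs2.le) hcase
    have hwlt : wmax < r * Real.sqrt 2 := by
      rw [div_lt_iff₀ hs2] at hcase; exact hcase
    -- the contact set
    set A : Set (EuclideanSpace ℝ (Fin (n + 1))) := K ∩ {x | dist c₀ x = r} with hAdef
    have hAsub : A ⊆ K := Set.inter_subset_left
    have hAcp : IsCompact A := by
      rw [hAdef]
      exact hKcp.inter_right (isClosed_eq (hdc c₀) continuous_const)
    have hAne : A.Nonempty := by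
      obtain ⟨x, hx, hmax⟩ := hKcp.exists_isMaxOn ⟨x₀, hx₀⟩ ((hdc c₀).continuousOn)
      refine ⟨x, hx, le_antisymm (hfmem c₀ x hx) (hfle c₀ (dist c₀ x) hmax)⟩
    by_cases hpair : ∃ x ∈ A, ∃ y ∈ A, ⟪x - c₀, y - c₀⟫ ≤ 0
    · obtain ⟨x, hxA, y, hyA, hip⟩ := hpair
      have hx : ‖x - c₀‖ = r := by rw [← dist_eq_norm, dist_comm]; exact hxA.2
      have hy : ‖y - c₀‖ = r := by rw [← dist_eq_norm, dist_comm]; exact hyA.2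
      have hxy : ‖x - y‖ ^ 2 = ‖x - c₀‖ ^ 2 - 2 * ⟪x - c₀, y - c₀⟫ + ‖y - c₀‖ ^ 2 := by
        rw [← norm_sub_sq_real, sub_sub_sub_cancel_right]
      have h1 : 2 * r ^ 2 ≤ ‖x - y‖ ^ 2 := by rw [hxy, hx, hy]; linarith
      have h2 : ‖x - y‖ ≤ wmax := by
        rw [← dist_eq_norm]; exact hdiam x (hAsub hxA) y (hAsub hyA)
      have hA2 : ‖x - y‖ ^ 2 ≤ wmax ^ 2 := pow_le_pow_left₀ (norm_nonneg _) h2 2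
      have hB2 : wmax ^ 2 < (r * Real.sqrt 2) ^ 2 := pow_lt_pow_left₀ hwlt hw0 (by norm_num)
      have hC2 : (r * Real.sqrt 2) ^ 2 = 2 * r ^ 2 := by rw [mul_pow, hs2sq]; ring
      linarith
    · push_neg at hpair
      -- uniform positive lower bound for the inner products, by compactness of A × A
      have hipcont : Continuous fun p : (EuclideanSpace ℝ (Fin (n + 1))) ×
          (EuclideanSpace ℝ (Fin (n + 1))) => ⟪p.1 - c₀, p.2 - c₀⟫ :=
        Continuous.inner (continuous_fst.sub continuous_const)
          (continuous_snd.sub continuous_const)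
      obtain ⟨⟨a₁, a₂⟩, haA, hamin⟩ := (hAcp.prod hAcp).exists_isMinOn
        (hAne.prod hAne) hipcont.continuousOn
      set δ : ℝ := ⟪a₁ - c₀, a₂ - c₀⟫ with hδdef
      have hδ0 : 0 < δ := hpair a₁ haA.1 a₂ haA.2
      obtain ⟨a₀, ha₀A⟩ := hAne
      set v : EuclideanSpace ℝ (Fin (n + 1)) := a₀ - c₀ with hvdef
      have hv : ‖v‖ = r := by rw [hvdef, ← dist_eq_norm, dist_comm]; exact ha₀A.2
      have hδle : ∀ x ∈ A, δ ≤ ⟪x - c₀, v⟫ := by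
        intro x hx
        exact hamin (Set.mk_mem_prod hx ha₀A)
      have hδr : δ ≤ r ^ 2 := by
        have := hδle a₀ ha₀A
        rwa [hvdef, real_inner_self_eq_norm_sq, ← hvdef, hv] at this
      -- the "cold" set C
      set C : Set (EuclideanSpace ℝ (Fin (n + 1))) :=
        K ∩ {x | ⟪x - c₀, v⟫ ≤ δ / 2} with hCdef
      have hCcp : IsCompact C := by
        rw [hCdef]
        exact hKcp.inter_right (isClosed_le
          (Continuous.inner (continuous_id.sub continuous_const) continuous_const)
          continuous_const)
      obtain ⟨r₁, hr₁lt, hr₁⟩ : ∃ r₁ : ℝ, r₁ < r ∧ ∀ x ∈ C, dist c₀ x ≤ r₁ := by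
        rcases C.eq_empty_or_nonempty with hCe | hCne
        · exact ⟨0, hr0, by simp [hCe]⟩
        · obtain ⟨x₁, hx₁C, hmax⟩ := hCcp.exists_isMaxOn hCne ((hdc c₀).continuousOn)
          refine ⟨dist c₀ x₁, ?_, hmax⟩
          rcases lt_or_eq_of_le (hfmem c₀ x₁ hx₁C.1) with h | h
          · exact h
          · exfalso
            have hx₁A : x₁ ∈ A := ⟨hx₁C.1, h⟩
            have h4 := hδle x₁ hx₁A
            have h5 : ⟪x₁ - c₀, v⟫ ≤ δ / 2 := hx₁C.2
            linarith
      -- choose the step size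
      set t : ℝ := min (δ / (2 * r ^ 2)) ((r - r₁) / (2 * r)) with htdef
      have ht0 : 0 < t :=
        lt_min (div_pos hδ0 (by positivity)) (div_pos (by linarith) (by linarith))
      have ht1 : t * r ^ 2 ≤ δ / 2 := by
        have h := min_le_left (δ / (2 * r ^ 2)) ((r - r₁) / (2 * r))
        rw [← htdef] at h
        calc t * r ^ 2 ≤ (δ / (2 * r ^ 2)) * r ^ 2 :=
          mul_le_mul_of_nonneg_right h (sq_nonneg r)
        _ = δ / 2 := by field_simp
      have ht2 : t * r ≤ (r - r₁) / 2 := by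
        have h := min_le_right (δ / (2 * r ^ 2)) ((r - r₁) / (2 * r))
        rw [← htdef] at h
        calc t * r ≤ ((r - r₁) / (2 * r)) * r :=
          mul_le_mul_of_nonneg_right h hr0.le
        _ = (r - r₁) / 2 := by field_simp
      -- bound on the two pieces
      set b₁ : ℝ := Real.sqrt (r ^ 2 - t * δ / 2) with hb₁def
      have hargnn : 0 ≤ r ^ 2 - t * δ / 2 := by
        have e0 : t * δ ≤ t * r ^ 2 := mul_le_mul_of_nonneg_left hδr ht0.le
        linarith [sq_nonneg r, ht1, hδ0]
      have hb₁lt : b₁ < r := by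
        rw [hb₁def]
        calc Real.sqrt (r ^ 2 - t * δ / 2) < Real.sqrt (r ^ 2) :=
          Real.sqrt_lt_sqrt hargnn (by linarith [mul_pos ht0 hδ0])
        _ = r := Real.sqrt_sq hr0.le
      set b : ℝ := max b₁ ((r + r₁) / 2) with hbdef
      have hblt : b < r := max_lt hb₁lt (by linarith)
      have hkey : f (c₀ + t • v) ≤ b := by
        refine hfle _ b ?_
        intro x hx
        by_cases hxC : ⟪x - c₀, v⟫ ≤ δ / 2
        · -- x ∈ C
          have hxC' : x ∈ C := ⟨hx, hxC⟩
          have h1 : dist (c₀ + t • v) x ≤ dist c₀ x + t * r := by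
            calc dist (c₀ + t • v) x ≤ dist (c₀ + t • v) c₀ + dist c₀ x := dist_triangle _ _ _
            _ = ‖t • v‖ + dist c₀ x := by rw [dist_eq_norm, add_sub_cancel_left]
            _ = t * r + dist c₀ x := by
                rw [norm_smul, Real.norm_eq_abs, abs_of_pos ht0, hv]
            _ = dist c₀ x + t * r := by ring
          have h6 := hr₁ x hxC'
          calc dist (c₀ + t • v) x ≤ (r + r₁) / 2 := by linarith
          _ ≤ b := le_max_right _ _
        · push_neg at hxC
          have hxnorm : ‖x - c₀‖ ≤ r := by
            rw [← dist_eq_norm, dist_comm]; exact hfmem c₀ x hx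
          have hexp : ‖x - (c₀ + t • v)‖ ^ 2
              = ‖x - c₀‖ ^ 2 - 2 * t * ⟪x - c₀, v⟫ + t ^ 2 * r ^ 2 := by
            have habel : x - (c₀ + t • v) = (x - c₀) - t • v := by abel
            rw [habel, norm_sub_sq_real, real_inner_smul_right, norm_smul,
              Real.norm_eq_abs, abs_of_pos ht0, mul_pow, hv]
            ring
          have hsq : ‖x - (c₀ + t • v)‖ ^ 2 ≤ r ^ 2 - t * δ / 2 := by
            rw [hexp]
            have e1 : t ^ 2 * r ^ 2 ≤ t * (δ / 2) := by
              calc t ^ 2 * r ^ 2 = t * (t * r ^ 2) := by ring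
              _ ≤ t * (δ / 2) := mul_le_mul_of_nonneg_left ht1 ht0.le
            have e2 : t * (δ / 2) ≤ t * ⟪x - c₀, v⟫ := mul_le_mul_of_nonneg_left hxC.le ht0.le
            have e3 : ‖x - c₀‖ ^ 2 ≤ r ^ 2 := pow_le_pow_left₀ (norm_nonneg _) hxnorm 2
            linarith
          have h7 : dist (c₀ + t • v) x ≤ b₁ := by
            rw [dist_comm, dist_eq_norm, hb₁def]
            exact (Real.le_sqrt (norm_nonneg _) hargnn).2 hsq
          exact le_trans h7 (le_max_left _ _)
      have h8 := hglobal (c₀ + t • v)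
      linarith
end

section
/- Let n ≥ 1 and let K be a compact convex subset of the Euclidean space ℝ^{n+1} with nonempty interior. Then there is a point c ∈ ℝ^{n+1} such that the closed ball with centre c and radius w_min/(n+2) is contained in K; in other words, the inradius of K satisfies r_in ≥ w_min/(n+2). -/
open Metric

/-- For a compact convex set `K` in Euclidean space `ℝ^{n+1}` with nonempty
interior, the inradius of `K` is at least `w_min / (n+2)`, where `w_min` is the
minimal width of `K`, i.e. the infimum over unit vectors `z` of `S z + S (-z)`
for the support function `S`. -/
theorem inradius_ge_minWidth_div
    (n : ℕ) (hn : 1 ≤ n)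
    (K : Set (EuclideanSpace ℝ (Fin (n + 1))))
    (hKint : (interior K).Nonempty) (hKcp : IsCompact K) (hKcv : Convex ℝ K)
    (S : EuclideanSpace ℝ (Fin (n + 1)) → ℝ)
    (hS : ∀ z, S z = sSup ((fun x => (inner ℝ x z : ℝ)) '' K))
    (wmin : ℝ)
    (hw : wmin = sInf ((fun z => S z + S (-z)) ''
      {z : EuclideanSpace ℝ (Fin (n + 1)) | ‖z‖ = 1})) :
    ∃ c : EuclideanSpace ℝ (Fin (n + 1)),
      closedBall c (wmin / ((n : ℝ) + 2)) ⊆ K := by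
  classical
  have hK0 : K.Nonempty := hKint.mono interior_subset
  obtain ⟨x0, hx0⟩ := hK0
  have hcont : ∀ z : EuclideanSpace ℝ (Fin (n + 1)), Continuous fun x : EuclideanSpace ℝ (Fin (n + 1)) => (inner ℝ x z : ℝ) :=
    fun z => continuous_id.inner continuous_const
  -- the sup is attained and is an upper bound
  have hSkey : ∀ z : EuclideanSpace ℝ (Fin (n + 1)), ∃ p ∈ K, (inner ℝ p z : ℝ) = S z ∧
      ∀ x ∈ K, (inner ℝ x z : ℝ) ≤ S z := by
    intro z
    obtain ⟨p, hpK, hps, hple⟩ :=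
      hKcp.exists_sSup_image_eq_and_ge ⟨x0, hx0⟩ ((hcont z).continuousOn)
    exact ⟨p, hpK, by rw [hS]; exact hps.symm,
      fun x hx => by rw [hS, hps]; exact hple x hx⟩
  have hSle : ∀ z : EuclideanSpace ℝ (Fin (n + 1)), ∀ x ∈ K, (inner ℝ x z : ℝ) ≤ S z :=
    fun z x hx => (hSkey z).choose_spec.2.2 x hx
  have hwpos : ∀ z : EuclideanSpace ℝ (Fin (n + 1)), 0 ≤ S z + S (-z) := by
    intro z
    have h1 := hSle z x0 hx0
    have h2 := hSle (-z) x0 hx0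
    rw [inner_neg_right] at h2
    linarith
  have hw0 : 0 ≤ wmin := by
    rw [hw]
    apply Real.sInf_nonneg
    rintro x ⟨z, -, rfl⟩
    exact hwpos z
  have hwle : ∀ z : EuclideanSpace ℝ (Fin (n + 1)), ‖z‖ = 1 → wmin ≤ S z + S (-z) := by
    intro z hz
    rw [hw]
    apply csInf_le
    · exact ⟨0, by rintro x ⟨u, -, rfl⟩; exact hwpos u⟩
    · exact ⟨z, hz, rfl⟩
  set r : ℝ := wmin / ((n : ℝ) + 2) with hr
  have hr0 : 0 ≤ r := div_nonneg hw0 (by positivity)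
  -- the family of sets for Helly's theorem
  set F : {z : EuclideanSpace ℝ (Fin (n + 1)) // ‖z‖ = 1} → Set (EuclideanSpace ℝ (Fin (n + 1))) :=
    fun u => K ∩ {x | (inner ℝ x u.1 : ℝ) ≤ S u.1 - r} with hF
  have hFcv : ∀ u, Convex ℝ (F u) := by
    intro u
    apply hKcv.inter
    have h : {x : EuclideanSpace ℝ (Fin (n + 1)) | (inner ℝ x u.1 : ℝ) ≤ S u.1 - r}
        = {x : EuclideanSpace ℝ (Fin (n + 1)) | (innerSL ℝ u.1) x ≤ S u.1 - r} := by
      ext x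
      simp only [Set.mem_setOf_eq, innerSL_apply_apply]
      rw [real_inner_comm]
    rw [h]
    exact convex_halfSpace_le (innerSL ℝ u.1).toLinearMap.isLinear _
  have hFcp : ∀ u, IsCompact (F u) :=
    fun u => hKcp.inter_right (isClosed_le (hcont u.1) continuous_const)
  have hdim : Module.finrank ℝ (EuclideanSpace ℝ (Fin (n + 1))) = n + 1 := finrank_euclideanSpace_fin
  have h_inter : ∀ I : Finset {z : EuclideanSpace ℝ (Fin (n + 1)) // ‖z‖ = 1},
      I.card ≤ Module.finrank ℝ (EuclideanSpace ℝ (Fin (n + 1))) + 1 → (⋂ i ∈ I, F i).Nonempty := by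
    intro I hIcard
    rw [hdim] at hIcard
    rcases I.eq_empty_or_nonempty with rfl | hIne
    · simp
    -- choose maximizers in direction `-u`
    have hpick : ∀ u : {z : EuclideanSpace ℝ (Fin (n + 1)) // ‖z‖ = 1}, ∃ p ∈ K, (inner ℝ p (-u.1) : ℝ) = S (-u.1) :=
      fun u => ⟨(hSkey (-u.1)).choose, (hSkey (-u.1)).choose_spec.1,
        (hSkey (-u.1)).choose_spec.2.1⟩
    choose p hpK hpeq using hpick
    set m : ℝ := (I.card : ℝ) with hm
    have hm1 : (1 : ℝ) ≤ m := by
      rw [hm]; exact_mod_cast Finset.one_le_card.2 hIne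
    have hm0 : (0 : ℝ) < m := lt_of_lt_of_le one_pos hm1
    have hmle : m ≤ (n : ℝ) + 2 := by
      have h : (I.card : ℝ) ≤ ((n + 2 : ℕ) : ℝ) := by exact_mod_cast hIcard
      rw [hm]
      refine h.trans_eq ?_
      push_cast; ring
    refine ⟨m⁻¹ • ∑ i ∈ I, p i, ?_⟩
    rw [Set.mem_iInter₂]
    intro j hj
    constructor
    · -- membership in K
      have h := hKcv.centerMass_mem (t := I) (w := fun _ => (1 : ℝ)) (z := p)
        (fun i _ => zero_le_one) (by simpa using hIne) (fun i _ => hpK i)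
      simpa [Finset.centerMass, hm] using h
    · -- the halfspace inequality
      show (inner ℝ (m⁻¹ • ∑ i ∈ I, p i) j.1 : ℝ) ≤ S j.1 - r
      have hin : (inner ℝ (m⁻¹ • ∑ i ∈ I, p i) j.1 : ℝ)
          = m⁻¹ * ∑ i ∈ I, (inner ℝ (p i) j.1 : ℝ) := by
        rw [real_inner_smul_left, sum_inner]
      have hsum : ∑ i ∈ I, (inner ℝ (p i) j.1 : ℝ)
          ≤ (m - 1) * S j.1 + (- S (-j.1)) := by
        rw [← Finset.add_sum_erase I _ hj]
        have h1 : (inner ℝ (p j) j.1 : ℝ) = - S (-j.1) := by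
          have h := hpeq j
          rw [inner_neg_right] at h
          linarith
        have h2 : ∑ i ∈ I.erase j, (inner ℝ (p i) j.1 : ℝ)
            ≤ ∑ i ∈ I.erase j, S j.1 :=
          Finset.sum_le_sum fun i _ => hSle j.1 (p i) (hpK i)
        have h3 : ∑ i ∈ I.erase j, S j.1 = (m - 1) * S j.1 := by
          rw [Finset.sum_const, Finset.card_erase_of_mem hj, nsmul_eq_mul]
          have h4 : ((I.card - 1 : ℕ) : ℝ) = m - 1 := by
            rw [Nat.cast_sub (Finset.one_le_card.2 hIne)]; norm_num [hm]
          rw [h4]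
        linarith
      have hkey : m⁻¹ * ((m - 1) * S j.1 + (- S (-j.1)))
          = S j.1 - m⁻¹ * (S j.1 + S (-j.1)) := by
        field_simp
        ring
      have hwr : r ≤ m⁻¹ * (S j.1 + S (-j.1)) := by
        rw [hr, ← div_eq_inv_mul]
        exact div_le_div₀ (hwpos j.1) (hwle j.1 j.2) hm0 hmle
      calc (inner ℝ (m⁻¹ • ∑ i ∈ I, p i) j.1 : ℝ)
          = m⁻¹ * ∑ i ∈ I, (inner ℝ (p i) j.1 : ℝ) := hin
        _ ≤ m⁻¹ * ((m - 1) * S j.1 + (- S (-j.1))) :=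
            mul_le_mul_of_nonneg_left hsum (inv_nonneg.2 hm0.le)
        _ = S j.1 - m⁻¹ * (S j.1 + S (-j.1)) := hkey
        _ ≤ S j.1 - r := by linarith
  obtain ⟨c, hc⟩ := Convex.helly_theorem_compact' hFcv hFcp h_inter
  rw [Set.mem_iInter] at hc
  refine ⟨c, fun y hy => ?_⟩
  by_contra hyK
  obtain ⟨f, t, hft, hty⟩ := geometric_hahn_banach_closed_point hKcv hKcp.isClosed hyK
  set v : EuclideanSpace ℝ (Fin (n + 1)) := (InnerProductSpace.toDual ℝ (EuclideanSpace ℝ (Fin (n + 1)))).symm f with hv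
  have hvf : ∀ w : EuclideanSpace ℝ (Fin (n + 1)), (inner ℝ v w : ℝ) = f w := fun w =>
    InnerProductSpace.toDual_symm_apply
  have hvne : v ≠ 0 := by
    intro h0
    have h1 : f x0 = 0 := by rw [← hvf, h0, inner_zero_left]
    have h2 : f y = 0 := by rw [← hvf, h0, inner_zero_left]
    have := hft x0 hx0
    rw [h1] at this; rw [h2] at hty
    linarith
  have hvn : (0 : ℝ) < ‖v‖ := norm_pos_iff.2 hvne
  set u : EuclideanSpace ℝ (Fin (n + 1)) := ‖v‖⁻¹ • v with hu
  have hun : ‖u‖ = 1 := by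
    rw [hu, norm_smul, norm_inv, norm_norm, inv_mul_cancel₀ hvn.ne']
  have hSu : S u < (inner ℝ y u : ℝ) := by
    obtain ⟨q, hqK, hq, -⟩ := hSkey u
    rw [← hq]
    have h5 : (inner ℝ q u : ℝ) = ‖v‖⁻¹ * f q := by
      rw [hu, real_inner_smul_right, real_inner_comm, hvf]
    have h6 : (inner ℝ y u : ℝ) = ‖v‖⁻¹ * f y := by
      rw [hu, real_inner_smul_right, real_inner_comm, hvf]
    rw [h5, h6]
    have := hft q hqK
    have hinv : (0 : ℝ) < ‖v‖⁻¹ := inv_pos.2 hvn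
    exact mul_lt_mul_of_pos_left (by linarith) hinv
  have hcu := hc ⟨u, hun⟩
  obtain ⟨-, hcu2⟩ := hcu
  have hyu : (inner ℝ y u : ℝ) ≤ S u := by
    have h7 : (inner ℝ y u : ℝ) = (inner ℝ c u : ℝ) + (inner ℝ (y - c) u : ℝ) := by
      rw [← inner_add_left]
      congr 1
      abel
    have h8 : (inner ℝ (y - c) u : ℝ) ≤ ‖y - c‖ * ‖u‖ := real_inner_le_norm _ _
    have h9 : ‖y - c‖ ≤ r := by
      rw [← dist_eq_norm]
      exact mem_closedBall.1 hy
    rw [hun, mul_one] at h8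
    have h10 : (inner ℝ c u : ℝ) ≤ S u - r := hcu2
    linarith
  exact absurd hyu (not_le.2 hSu)
end

section
/- Let n ≥ 2 and 0 < ε ≤ 1, and let λ = (λ₁,…,λₙ) ∈ ℝⁿ with λᵢ > 0 for all i satisfy ε λ_max ≤ λ_min, where λ_min and λ_max are the smallest and largest of the λᵢ. Then for every index i one has √ε / n ≤ (H(λ) − λᵢ) / R(λ)^{1/2} ≤ 1/ε; that is, the partial derivatives ḟ^i = R^{−1/2}(H − λᵢ) of the speed function f = R^{1/2} satisfy ε^{1/2}/n ≤ ḟ^i ≤ ε^{−1}. -/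
open Finset

/-- If `ε λ_max ≤ λ_min` for positive principal curvatures, then the partial
derivatives `ḟ^i = R^{-1/2}(H - λᵢ)` of the speed function `f = R^{1/2}`
satisfy `√ε / n ≤ ḟ^i ≤ 1/ε`. -/
theorem speed_derivative_pinching
    (n : ℕ) (hn : 2 ≤ n) (ε : ℝ) (hε0 : 0 < ε) (hε1 : ε ≤ 1)
    (lam : Fin n → ℝ) (hpos : ∀ i, 0 < lam i)
    (H R : ℝ) (hH : H = ∑ i, lam i) (hR : R = H ^ 2 - ∑ i, (lam i) ^ 2)
    (hpinch : ∀ i j, ε * lam i ≤ lam j) :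
    ∀ i, Real.sqrt ε / (n : ℝ) ≤ (H - lam i) / Real.sqrt R ∧
      (H - lam i) / Real.sqrt R ≤ 1 / ε := by
  intro i
  set S : ℝ := ∑ j ∈ univ.erase i, lam j with hS
  set Q : ℝ := ∑ j ∈ univ.erase i, (lam j) ^ 2 with hQ
  have hHs : H = lam i + S := by
    rw [hH, ← Finset.add_sum_erase _ _ (mem_univ i)]
  have hsq : ∑ j, (lam j) ^ 2 = (lam i) ^ 2 + Q := by
    rw [← Finset.add_sum_erase _ _ (mem_univ i)]
  have hRe : R = 2 * lam i * S + (S ^ 2 - Q) := by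
    rw [hR, hHs, hsq]; ring
  -- there is some j ≠ i
  obtain ⟨j, hji⟩ : ∃ j : Fin n, j ≠ i := by
    have : 1 < Fintype.card (Fin n) := by simp; omega
    exact Fintype.exists_ne_of_one_lt_card this i
  have hjmem : j ∈ univ.erase i := Finset.mem_erase.2 ⟨hji, mem_univ j⟩
  have hSpos : 0 < S :=
    Finset.sum_pos (fun k _ => hpos k) ⟨j, hjmem⟩
  have hle_single : ∀ k, k ∈ univ.erase i → lam k ≤ S := fun k hk =>
    Finset.single_le_sum (fun m _ => (hpos m).le) hk
  have hQS : Q ≤ S ^ 2 := by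
    have : Q ≤ ∑ k ∈ univ.erase i, lam k * S := by
      apply Finset.sum_le_sum
      intro k hk
      have := hle_single k hk
      nlinarith [hpos k]
    calc Q ≤ ∑ k ∈ univ.erase i, lam k * S := this
      _ = S * S := by rw [← Finset.sum_mul]
      _ = S ^ 2 := by ring
  have hQle : ε * Q ≤ lam i * S := by
    have : ∑ k ∈ univ.erase i, ε * (lam k) ^ 2 ≤ ∑ k ∈ univ.erase i, lam i * lam k := by
      apply Finset.sum_le_sum
      intro k hk
      have h1 := hpinch k i
      nlinarith [hpos k]
    calc ε * Q = ∑ k ∈ univ.erase i, ε * (lam k) ^ 2 := by rw [Finset.mul_sum]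
      _ ≤ ∑ k ∈ univ.erase i, lam i * lam k := this
      _ = lam i * S := by rw [← Finset.mul_sum]
  have hlamS : ε * lam i ≤ S := (hpinch i j).trans (hle_single j hjmem)
  have hRpos : 0 < R := by nlinarith [hpos i]
  have hsR : 0 < Real.sqrt R := Real.sqrt_pos.2 hRpos
  have hHi : H - lam i = S := by rw [hHs]; ring
  have hnpos : (0 : ℝ) < (n : ℝ) := by positivity
  have hn2 : (2 : ℝ) ≤ (n : ℝ) := by exact_mod_cast hn
  constructor
  · -- lower bound
    have h4 : ε * lam i * S ≤ S * S := mul_le_mul_of_nonneg_right hlamS hSpos.le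
    have h5 : (0:ℝ) ≤ (1 - ε) * (S ^ 2 - Q) := mul_nonneg (by linarith) (by linarith)
    have hQ0 : (0:ℝ) ≤ Q := Finset.sum_nonneg fun k _ => sq_nonneg _
    have h3 : ε * R ≤ 3 * S ^ 2 := by rw [hRe]; nlinarith [hQ0]
    have hn4 : (4:ℝ) ≤ (n:ℝ) ^ 2 := by nlinarith
    have h6 : (0:ℝ) ≤ ((n:ℝ) ^ 2 - 3) * S ^ 2 := mul_nonneg (by linarith) (sq_nonneg S)
    have hkey : ε * R ≤ ((n : ℝ) * S) ^ 2 := by nlinarith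
    have h1 : Real.sqrt ε * Real.sqrt R ≤ (n : ℝ) * S := by
      rw [← Real.sqrt_mul hε0.le]
      calc Real.sqrt (ε * R) ≤ Real.sqrt (((n : ℝ) * S) ^ 2) := Real.sqrt_le_sqrt hkey
        _ = (n : ℝ) * S := Real.sqrt_sq (by positivity)
    rw [hHi, div_le_div_iff₀ hnpos hsR]
    linarith
  · -- upper bound
    have hiS : (0:ℝ) ≤ lam i * S := (mul_pos (hpos i) hSpos).le
    have ha : ε ^ 2 * Q ≤ lam i * S := by
      calc ε ^ 2 * Q = ε * (ε * Q) := by ring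
        _ ≤ ε * (lam i * S) := mul_le_mul_of_nonneg_left hQle hε0.le
        _ ≤ 1 * (lam i * S) := mul_le_mul_of_nonneg_right hε1 hiS
        _ = lam i * S := one_mul _
    have hb : ε ^ 2 * (S ^ 2 - Q) ≤ S ^ 2 - Q := by
      calc ε ^ 2 * (S ^ 2 - Q) ≤ 1 * (S ^ 2 - Q) :=
            mul_le_mul_of_nonneg_right (by nlinarith) (by linarith)
        _ = S ^ 2 - Q := one_mul _
    have hkey : (ε * S) ^ 2 ≤ R := by
      have he : (ε * S) ^ 2 = ε ^ 2 * Q + ε ^ 2 * (S ^ 2 - Q) := by ring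
      rw [hRe, he]; linarith
    have h1 : ε * S ≤ Real.sqrt R := by
      calc ε * S = Real.sqrt ((ε * S) ^ 2) := (Real.sqrt_sq (by positivity)).symm
        _ ≤ Real.sqrt R := Real.sqrt_le_sqrt hkey
    rw [hHi, div_le_div_iff₀ hsR hε0]
    linarith
end

section
/- Let n ≥ 2. The function f(λ) = ((Σᵢ λᵢ)² − Σᵢ λᵢ²)^{1/2} = R(λ)^{1/2} is concave on the open positive cone Γ₊ = {λ ∈ ℝⁿ : λᵢ > 0 for all i}. -/
open Finset

private lemma sum_sub_aux (n : ℕ) (x y : Fin n → ℝ) (t : ℝ) :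
    ∑ i, (x i - t * y i) = (∑ i, x i) - t * ∑ i, y i := by
  rw [Finset.sum_sub_distrib, Finset.mul_sum]

private lemma sum_sq_sub_aux (n : ℕ) (x y : Fin n → ℝ) (t : ℝ) :
    ∑ i, (x i - t * y i)^2
      = (∑ i, (x i)^2) - 2*t*(∑ i, x i * y i) + t^2 * ∑ i, (y i)^2 := by
  simp_rw [sub_sq, mul_pow]
  rw [Finset.sum_add_distrib, Finset.sum_sub_distrib, ← Finset.mul_sum,
    show ∑ i, 2 * x i * (t * y i) = 2*t*∑ i, x i * y i by
      rw [Finset.mul_sum]; exact Finset.sum_congr rfl fun i _ => by ring]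

private lemma Q_pos {n : ℕ} (hn : 2 ≤ n) {x : Fin n → ℝ} (hx : ∀ i, 0 < x i) :
    0 < (∑ i, x i)^2 - ∑ i, (x i)^2 := by
  have h : (∑ i, x i)^2 = ∑ i, ∑ j, x i * x j := by rw [sq, Finset.sum_mul_sum]
  rw [h, ← Finset.sum_sub_distrib]
  apply Finset.sum_pos
  · intro i _
    have : ∑ j, x i * x j = (∑ j ∈ Finset.univ.erase i, x i * x j) + x i * x i := by
      rw [Finset.sum_erase_add]; exact Finset.mem_univ i
    rw [this]
    have : (∑ j ∈ Finset.univ.erase i, x i * x j) + x i * x i - x i ^ 2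
        = ∑ j ∈ Finset.univ.erase i, x i * x j := by ring
    rw [this]
    apply Finset.sum_pos
    · intro j _; exact mul_pos (hx i) (hx j)
    · rw [← Finset.card_pos, Finset.card_erase_of_mem (Finset.mem_univ i),
        Finset.card_univ, Fintype.card_fin]
      omega
  · rw [← Finset.card_pos, Finset.card_univ, Fintype.card_fin]; omega

private lemma sum_pos_of_pos {n : ℕ} (hn : 2 ≤ n) {x : Fin n → ℝ} (hx : ∀ i, 0 < x i) :
    0 < ∑ i, x i := by
  apply Finset.sum_pos (fun i _ => hx i)
  rw [← Finset.card_pos, Finset.card_univ, Fintype.card_fin]; omega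

/-- Reverse Cauchy–Schwarz for the Lorentzian form on the positive cone. -/
private lemma B_ge {n : ℕ} (hn : 2 ≤ n) {x y : Fin n → ℝ}
    (hx : ∀ i, 0 < x i) (hy : ∀ i, 0 < y i) :
    Real.sqrt ((∑ i, x i)^2 - ∑ i, (x i)^2) * Real.sqrt ((∑ i, y i)^2 - ∑ i, (y i)^2)
      ≤ (∑ i, x i) * (∑ i, y i) - ∑ i, x i * y i := by
  set Sx := ∑ i, x i with hSx
  set Sy := ∑ i, y i with hSy
  have hSxp : 0 < Sx := sum_pos_of_pos hn hx
  have hSyp : 0 < Sy := sum_pos_of_pos hn hy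
  set t := Sx / Sy with ht
  have htp : 0 < t := div_pos hSxp hSyp
  set Qx := Sx^2 - ∑ i, (x i)^2 with hQx
  set Qy := Sy^2 - ∑ i, (y i)^2 with hQy
  set B := Sx * Sy - ∑ i, x i * y i with hB
  have hQxp : 0 < Qx := Q_pos hn hx
  have hQyp : 0 < Qy := Q_pos hn hy
  -- the quadratic evaluated at t = Sx/Sy is nonpositive
  have hSzero : Sx - t * Sy = 0 := by rw [ht, div_mul_cancel₀ _ hSyp.ne', sub_self]
  have hkey : Qx - 2*t*B + t^2*Qy ≤ 0 := by
    have h1 : Qx - 2*t*B + t^2*Qy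
        = (∑ i, (x i - t * y i))^2 - ∑ i, (x i - t * y i)^2 := by
      rw [sum_sub_aux, sum_sq_sub_aux, ← hSx, ← hSy, hQx, hQy, hB]; ring
    rw [h1, sum_sub_aux, ← hSx, ← hSy, hSzero]
    have : (0:ℝ) ≤ ∑ i, (x i - t * y i)^2 :=
      Finset.sum_nonneg fun i _ => sq_nonneg _
    nlinarith
  -- AM-GM
  have hamgm : 2 * t * Real.sqrt Qx * Real.sqrt Qy ≤ Qx + t^2*Qy := by
    nlinarith [sq_nonneg (Real.sqrt Qx - t * Real.sqrt Qy),
      Real.sq_sqrt hQxp.le, Real.sq_sqrt hQyp.le,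
      Real.sqrt_nonneg Qx, Real.sqrt_nonneg Qy]
  have : 2 * t * Real.sqrt Qx * Real.sqrt Qy ≤ 2 * t * B := by linarith
  have := le_of_mul_le_mul_left (by linarith [this] : (2*t) * (Real.sqrt Qx * Real.sqrt Qy) ≤ (2*t) * B) (by linarith)
  linarith

/-- Superadditivity of `f` on the positive cone. -/
private lemma f_superadd {n : ℕ} (hn : 2 ≤ n) {x y : Fin n → ℝ}
    (hx : ∀ i, 0 < x i) (hy : ∀ i, 0 < y i) :
    Real.sqrt ((∑ i, x i)^2 - ∑ i, (x i)^2)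
      + Real.sqrt ((∑ i, y i)^2 - ∑ i, (y i)^2)
      ≤ Real.sqrt ((∑ i, (x i + y i))^2 - ∑ i, (x i + y i)^2) := by
  set Qx := (∑ i, x i)^2 - ∑ i, (x i)^2 with hQx
  set Qy := (∑ i, y i)^2 - ∑ i, (y i)^2 with hQy
  set B := (∑ i, x i) * (∑ i, y i) - ∑ i, x i * y i with hB
  have hQxp : 0 < Qx := Q_pos hn hx
  have hQyp : 0 < Qy := Q_pos hn hy
  have hBge := B_ge hn hx hy
  have hexp : (∑ i, (x i + y i))^2 - ∑ i, (x i + y i)^2 = Qx + Qy + 2*B := by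
    have h1 : ∑ i, (x i + y i) = (∑ i, x i) + ∑ i, y i := Finset.sum_add_distrib
    have h2 : ∑ i, (x i + y i)^2
        = (∑ i, (x i)^2) + 2*(∑ i, x i * y i) + ∑ i, (y i)^2 := by
      simp_rw [add_sq]
      rw [Finset.sum_add_distrib, Finset.sum_add_distrib,
        show ∑ i, 2 * x i * y i = 2*∑ i, x i * y i by
          rw [Finset.mul_sum]; exact Finset.sum_congr rfl fun i _ => by ring]
    rw [h1, h2, hQx, hQy, hB]; ring
  rw [hexp]
  rw [show Real.sqrt Qx + Real.sqrt Qy = Real.sqrt ((Real.sqrt Qx + Real.sqrt Qy)^2) by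
    rw [Real.sqrt_sq (by positivity)]]
  apply Real.sqrt_le_sqrt
  have hx2 := Real.sq_sqrt hQxp.le
  have hy2 := Real.sq_sqrt hQyp.le
  nlinarith [hBge]

private lemma f_homog {n : ℕ} (x : Fin n → ℝ) {c : ℝ} (hc : 0 ≤ c) :
    Real.sqrt ((∑ i, c * x i)^2 - ∑ i, (c * x i)^2)
      = c * Real.sqrt ((∑ i, x i)^2 - ∑ i, (x i)^2) := by
  have h1 : ∑ i, c * x i = c * ∑ i, x i := by rw [Finset.mul_sum]
  have h2 : ∑ i, (c * x i)^2 = c^2 * ∑ i, (x i)^2 := by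
    rw [Finset.mul_sum]; exact Finset.sum_congr rfl fun i _ => by ring
  rw [h1, h2, show (c * ∑ i, x i)^2 - c^2 * ∑ i, (x i)^2
      = c^2 * ((∑ i, x i)^2 - ∑ i, (x i)^2) by ring,
    Real.sqrt_mul (sq_nonneg c), Real.sqrt_sq hc]

/-- The speed function `f(λ) = R(λ)^{1/2} = ((Σ λᵢ)² - Σ λᵢ²)^{1/2}` is
concave on the open positive cone `Γ₊`. -/
theorem sqrt_scalarCurvature_concave
    (n : ℕ) (hn : 2 ≤ n) :
    ConcaveOn ℝ {lam : Fin n → ℝ | ∀ i, 0 < lam i}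
      (fun lam => Real.sqrt ((∑ i, lam i) ^ 2 - ∑ i, (lam i) ^ 2)) := by
  constructor
  · intro x hx y hy a b ha hb hab
    intro i
    rcases eq_or_lt_of_le ha with ha0 | ha0
    · simp only [← ha0, zero_smul, zero_add] at *
      have hb1 : b = 1 := by linarith
      simpa [hb1] using hy i
    · have : 0 < a * x i := mul_pos ha0 (hx i)
      have : 0 ≤ b * y i := mul_nonneg hb (hy i).le
      simp only [Pi.add_apply, Pi.smul_apply, smul_eq_mul]
      nlinarith [hx i, hy i]
  · intro x hx y hy a b ha hb hab
    rcases eq_or_lt_of_le ha with ha0 | ha0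
    · have hb1 : b = 1 := by linarith
      simp [← ha0, hb1]
    rcases eq_or_lt_of_le hb with hb0 | hb0
    · have ha1 : a = 1 := by linarith
      simp [← hb0, ha1]
    have hax : ∀ i, 0 < a * x i := fun i => mul_pos ha0 (hx i)
    have hby : ∀ i, 0 < b * y i := fun i => mul_pos hb0 (hy i)
    have hsup := f_superadd hn hax hby
    simp only [Pi.add_apply, Pi.smul_apply, smul_eq_mul]
    calc a * Real.sqrt ((∑ i, x i) ^ 2 - ∑ i, x i ^ 2)
          + b * Real.sqrt ((∑ i, y i) ^ 2 - ∑ i, y i ^ 2)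
        = Real.sqrt ((∑ i, a * x i)^2 - ∑ i, (a * x i)^2)
          + Real.sqrt ((∑ i, b * y i)^2 - ∑ i, (b * y i)^2) := by
          rw [f_homog x ha, f_homog y hb]
      _ ≤ Real.sqrt ((∑ i, (a * x i + b * y i))^2 - ∑ i, (a * x i + b * y i)^2) :=
          hsup
end

section
/- Let n ≥ 2. The function f(λ) = R(λ)^{1/2} is inverse-concave on the open positive cone: the function f*(λ) = −f(λ₁^{−1},…,λₙ^{−1}) = −(Σ_{i≠j} λᵢ^{−1} λⱼ^{−1})^{1/2} is concave on Γ₊ = {λ ∈ ℝⁿ : λᵢ > 0 for all i}. -/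
open Finset

private lemma convex_posCone (n : ℕ) :
    Convex ℝ {lam : Fin n → ℝ | ∀ i, 0 < lam i} := by
  intro x hx y hy a b ha hb hab
  intro i
  rcases eq_or_lt_of_le ha with h | h
  · have hb1 : b = 1 := by linarith
    simp only [← h, hb1, Pi.add_apply, Pi.smul_apply, smul_eq_mul]
    simpa using hy i
  · have h1 : 0 < a * x i := mul_pos h (hx i)
    have h2 : 0 ≤ b * y i := mul_nonneg hb (hy i).le
    simp only [Pi.add_apply, Pi.smul_apply, smul_eq_mul]
    linarith

private lemma sqrt_inv_mul_eq_exp {a b : ℝ} (ha : 0 < a) (hb : 0 < b) :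
    Real.sqrt (a⁻¹ * b⁻¹) =
      Real.exp ((1/2 : ℝ) * (-Real.log a) + (1/2 : ℝ) * (-Real.log b)) := by
  have key : a⁻¹ * b⁻¹ =
      Real.exp ((1/2 : ℝ) * (-Real.log a) + (1/2 : ℝ) * (-Real.log b)) ^ 2 := by
    rw [sq, ← Real.exp_add]
    have : (1/2 : ℝ) * (-Real.log a) + (1/2 : ℝ) * (-Real.log b) +
        ((1/2 : ℝ) * (-Real.log a) + (1/2 : ℝ) * (-Real.log b)) =
        -Real.log a + -Real.log b := by ring
    rw [this, Real.exp_add, ← Real.log_inv, ← Real.log_inv,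
      Real.exp_log (inv_pos.2 ha), Real.exp_log (inv_pos.2 hb)]
  rw [key, Real.sqrt_sq (Real.exp_nonneg _)]

private lemma coord_convex (n : ℕ) (i j : Fin n) :
    ConvexOn ℝ {lam : Fin n → ℝ | ∀ i, 0 < lam i}
      (fun lam => Real.sqrt ((lam i)⁻¹ * (lam j)⁻¹)) := by
  set S := {lam : Fin n → ℝ | ∀ i, 0 < lam i} with hSdef
  have hS : Convex ℝ S := convex_posCone n
  have hneg : ∀ k : Fin n, ConvexOn ℝ S (fun lam => -Real.log (lam k)) := by
    intro k
    refine ⟨hS, fun x hx y hy a b ha hb hab => ?_⟩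
    have := strictConcaveOn_log_Ioi.concaveOn.2 (Set.mem_Ioi.2 (hx k))
      (Set.mem_Ioi.2 (hy k)) ha hb hab
    simp only [smul_eq_mul, Pi.add_apply, Pi.smul_apply] at this ⊢
    linarith
  have hg : ConvexOn ℝ S
      (fun lam => (1/2 : ℝ) * (-Real.log (lam i)) + (1/2 : ℝ) * (-Real.log (lam j))) := by
    have h1 := ((hneg i).smul (by norm_num : (0:ℝ) ≤ 1/2))
    have h2 := ((hneg j).smul (by norm_num : (0:ℝ) ≤ 1/2))
    have := h1.add h2
    simpa [smul_eq_mul, Pi.add_def] using this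
  have hcomp : ConvexOn ℝ S (fun lam =>
      Real.exp ((1/2 : ℝ) * (-Real.log (lam i)) + (1/2 : ℝ) * (-Real.log (lam j)))) := by
    refine ⟨hS, fun x hx y hy a b ha hb hab => ?_⟩
    have h1 := hg.2 hx hy ha hb hab
    have h2 := Real.exp_le_exp.2 h1
    refine h2.trans ?_
    have := convexOn_exp.2 (Set.mem_univ ((1/2 : ℝ) * (-Real.log (x i)) +
        (1/2 : ℝ) * (-Real.log (x j))))
      (Set.mem_univ ((1/2 : ℝ) * (-Real.log (y i)) + (1/2 : ℝ) * (-Real.log (y j))))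
      ha hb hab
    simpa [smul_eq_mul] using this
  refine ⟨hS, fun x hx y hy a b ha hb hab => ?_⟩
  have hz : a • x + b • y ∈ S := hS hx hy ha hb hab
  have hres := hcomp.2 hx hy ha hb hab
  rw [show (fun lam => Real.sqrt ((lam i)⁻¹ * (lam j)⁻¹)) (a • x + b • y)
      = Real.sqrt (((a • x + b • y) i)⁻¹ * ((a • x + b • y) j)⁻¹) from rfl]
  rw [sqrt_inv_mul_eq_exp (hz i) (hz j)]
  simp only [smul_eq_mul]
  rw [sqrt_inv_mul_eq_exp (hx i) (hx j), sqrt_inv_mul_eq_exp (hy i) (hy j)]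
  simpa [smul_eq_mul] using hres

private lemma offdiag_sum (n : ℕ) (a : Fin n → ℝ) :
    ∑ p : Fin n × Fin n, (if p.1 = p.2 then 0 else a p.1 * a p.2)
      = (∑ i, a i) ^ 2 - ∑ i, (a i) ^ 2 := by
  have h1 : (∑ i, a i) ^ 2 = ∑ p : Fin n × Fin n, a p.1 * a p.2 := by
    rw [sq, Finset.sum_mul_sum]
    exact (Fintype.sum_prod_type (fun p : Fin n × Fin n => a p.1 * a p.2)).symm
  have h2 : ∑ p : Fin n × Fin n, (if p.1 = p.2 then a p.1 * a p.2 else 0)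
      = ∑ i, (a i) ^ 2 := by
    rw [Fintype.sum_prod_type]
    simp [Finset.sum_ite_eq, sq]
  rw [h1, ← h2, ← Finset.sum_sub_distrib]
  apply Finset.sum_congr rfl
  intro p _
  by_cases h : p.1 = p.2 <;> simp [h]

private lemma euclid_norm_mono {ι : Type*} [Fintype ι]
    (a c : EuclideanSpace ℝ ι) (h : ∀ i, |a i| ≤ c i) : ‖a‖ ≤ ‖c‖ := by
  rw [EuclideanSpace.norm_eq, EuclideanSpace.norm_eq]
  apply Real.sqrt_le_sqrt
  apply Finset.sum_le_sum
  intro i _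
  have h1 : |a i| ≤ |c i| := (h i).trans (le_abs_self _)
  simp only [Real.norm_eq_abs]
  exact pow_le_pow_left₀ (abs_nonneg _) h1 2

/-- The speed function `f = R^{1/2}` is inverse-concave: the function
`f*(λ) = -f(λ₁⁻¹, …, λₙ⁻¹) = -((Σ λᵢ⁻¹)² - Σ λᵢ⁻²)^{1/2}` is concave on the
open positive cone `Γ₊`. -/
theorem sqrt_scalarCurvature_inverse_concave
    (n : ℕ) (hn : 2 ≤ n) :
    ConcaveOn ℝ {lam : Fin n → ℝ | ∀ i, 0 < lam i}
      (fun lam =>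
        -Real.sqrt ((∑ i, (lam i)⁻¹) ^ 2 - ∑ i, ((lam i)⁻¹) ^ 2)) := by
  set S := {lam : Fin n → ℝ | ∀ i, 0 < lam i} with hSdef
  set v : (Fin n → ℝ) → EuclideanSpace ℝ (Fin n × Fin n) := fun lam =>
    WithLp.toLp 2 (fun p : Fin n × Fin n => if p.1 = p.2 then 0 else Real.sqrt ((lam p.1)⁻¹ * (lam p.2)⁻¹)) with hv
  have hv_nonneg : ∀ lam p, 0 ≤ v lam p := by
    intro lam p
    simp only [hv, PiLp.toLp_apply]
    split
    exacts [le_rfl, Real.sqrt_nonneg _]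
  have hnorm : ∀ lam ∈ S,
      Real.sqrt ((∑ i, (lam i)⁻¹) ^ 2 - ∑ i, ((lam i)⁻¹) ^ 2) = ‖v lam‖ := by
    intro lam hlam
    rw [EuclideanSpace.norm_eq]
    congr 1
    rw [← offdiag_sum n (fun i => (lam i)⁻¹)]
    apply Finset.sum_congr rfl
    intro p _
    simp only [Real.norm_eq_abs, sq_abs, hv, PiLp.toLp_apply]
    by_cases h : p.1 = p.2
    · simp [h]
    · simp only [h, if_false]
      exact (Real.sq_sqrt (mul_nonneg (inv_nonneg.2 (hlam p.1).le)
        (inv_nonneg.2 (hlam p.2).le))).symm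
  refine ⟨convex_posCone n, fun x hx y hy a b ha hb hab => ?_⟩
  have hz : a • x + b • y ∈ S := convex_posCone n hx hy ha hb hab
  simp only [smul_eq_mul]
  rw [hnorm _ hz, hnorm _ hx, hnorm _ hy]
  have key : ‖v (a • x + b • y)‖ ≤ a * ‖v x‖ + b * ‖v y‖ := by
    have step1 : ‖v (a • x + b • y)‖ ≤ ‖a • v x + b • v y‖ := by
      apply euclid_norm_mono
      intro p
      rw [abs_of_nonneg (hv_nonneg _ p)]
      have happ : (a • v x + b • v y) p = a * v x p + b * v y p := by
        simp [PiLp.add_apply, PiLp.smul_apply, smul_eq_mul]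
      rw [happ]
      by_cases h : p.1 = p.2
      · simp [hv, h]
      · have := (coord_convex n p.1 p.2).2 hx hy ha hb hab
        simp only [smul_eq_mul] at this
        simpa [hv, h] using this
    refine step1.trans ?_
    calc ‖a • v x + b • v y‖ ≤ ‖a • v x‖ + ‖b • v y‖ := norm_add_le _ _
      _ = a * ‖v x‖ + b * ‖v y‖ := by
          rw [norm_smul, norm_smul, Real.norm_eq_abs, Real.norm_eq_abs,
            abs_of_nonneg ha, abs_of_nonneg hb]
  linarith
end

section
/- Let n ≥ 2 and let λ = (λ₁,…,λₙ) ∈ ℝⁿ with λᵢ > 0 for all i and R(λ) > 0. Then for all indices k ≠ l with λₖ ≠ λₗ, the speed function f = R^{1/2}, whose partial derivatives are ḟ^i = R^{−1/2}(H − λᵢ), satisfies Andrews' first inverse-concavity criterion: (ḟ^k − ḟ^l)/(λₖ − λₗ) + ḟ^k/λₗ + ḟ^l/λₖ ≥ 0. Equivalently, (H − λₖ)/λₗ + (H − λₗ)/λₖ ≥ 1. -/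
open Finset

/-- Andrews' first inverse-concavity criterion for the speed function
`f = R^{1/2}` with partial derivatives `ḟ^i = R^{-1/2}(H - λᵢ)`:
for `k ≠ l` with `λₖ ≠ λₗ`,
`(ḟ^k - ḟ^l)/(λₖ - λₗ) + ḟ^k/λₗ + ḟ^l/λₖ ≥ 0`. -/
theorem andrews_first_criterion
    (n : ℕ) (hn : 2 ≤ n)
    (lam : Fin n → ℝ) (hpos : ∀ i, 0 < lam i)
    (H R : ℝ) (hH : H = ∑ i, lam i) (hR : R = H ^ 2 - ∑ i, (lam i) ^ 2)
    (hRpos : 0 < R)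
    (fdot : Fin n → ℝ) (hfdot : ∀ i, fdot i = (H - lam i) / Real.sqrt R) :
    ∀ k l, k ≠ l → lam k ≠ lam l →
      0 ≤ (fdot k - fdot l) / (lam k - lam l)
        + fdot k / lam l + fdot l / lam k := by
  intro k l hkl hne
  have hs : 0 < Real.sqrt R := Real.sqrt_pos.mpr hRpos
  have hk := hpos k
  have hl := hpos l
  -- key: H ≥ λk + λl
  have hsum : lam k + lam l ≤ H := by
    have : ∑ i ∈ ({k, l} : Finset (Fin n)), lam i ≤ ∑ i, lam i := by
      apply Finset.sum_le_sum_of_subset_of_nonneg (Finset.subset_univ _)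
      intro i _ _; exact (hpos i).le
    rwa [Finset.sum_pair hkl, ← hH] at this
  -- first term equals -1/√R
  have h1 : (fdot k - fdot l) / (lam k - lam l) = -(1 / Real.sqrt R) := by
    rw [hfdot k, hfdot l]
    have hd : lam k - lam l ≠ 0 := sub_ne_zero.mpr hne
    field_simp
    ring
  rw [h1, hfdot k, hfdot l]
  have h2 : 1 ≤ (H - lam k) / lam l := by
    rw [le_div_iff₀ hl]
    linarith
  have h3 : 0 ≤ (H - lam l) / lam k := by
    apply div_nonneg _ hk.le
    linarith
  have hA : (H - lam k) / Real.sqrt R / lam l = ((H - lam k) / lam l) / Real.sqrt R :=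
    div_right_comm _ _ _
  have hB : (H - lam l) / Real.sqrt R / lam k = ((H - lam l) / lam k) / Real.sqrt R :=
    div_right_comm _ _ _
  rw [hA, hB]
  have : 0 ≤ ((H - lam k) / lam l - 1) / Real.sqrt R + ((H - lam l) / lam k) / Real.sqrt R := by
    apply add_nonneg <;> apply div_nonneg _ hs.le
    · linarith
    · exact h3
  have hrw : -(1 / Real.sqrt R) + ((H - lam k) / lam l) / Real.sqrt R
      + ((H - lam l) / lam k) / Real.sqrt R
      = ((H - lam k) / lam l - 1) / Real.sqrt R + ((H - lam l) / lam k) / Real.sqrt R := by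
    field_simp
    ring
  linarith [hrw ▸ this]
end

section
/- Let n ≥ 2 and let λ = (λ₁,…,λₙ) ∈ ℝⁿ with λᵢ > 0 for all i. Then the symmetric n×n real matrix M with entries M_{kl} = (1 − δ_{kl}) − (H(λ) − λₖ)(H(λ) − λₗ)/R(λ) + 2 δ_{kl} (H(λ) − λₖ)/λₖ is positive semidefinite. (This matrix equals R^{1/2}·(f̈^{kl} + 2(ḟ^k/λₖ)δ_{kl}) for the speed function f = R^{1/2}, whose first and second partial derivatives are ḟ^i = R^{−1/2}(H − λᵢ) and f̈^{ij} = −R^{−3/2}(H − λᵢ)(H − λⱼ) + R^{−1/2}(1 − δ_{ij}); its positive semidefiniteness is Andrews' second inverse-concavity criterion for f.) -/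
open Finset

/-- Andrews' second inverse-concavity criterion for `f = R^{1/2}`: the matrix
`M_{kl} = (1 - δ_{kl}) - (H - λₖ)(H - λₗ)/R + 2 δ_{kl} (H - λₖ)/λₖ`
is positive semidefinite. -/
theorem andrews_second_criterion
    (n : ℕ) (hn : 2 ≤ n)
    (lam : Fin n → ℝ) (hpos : ∀ i, 0 < lam i)
    (H R : ℝ) (hH : H = ∑ i, lam i) (hR : R = H ^ 2 - ∑ i, (lam i) ^ 2) :
    (Matrix.of fun k l : Fin n =>
      (if k = l then (0 : ℝ) else 1)
        - (H - lam k) * (H - lam l) / R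
        + (if k = l then 2 * (H - lam k) / lam k else 0)).PosSemidef := by
  -- a k := H - lam k is positive
  have ha : ∀ k, 0 < H - lam k := by
    intro k
    have h1 : H - lam k = ∑ l ∈ univ.erase k, lam l := by
      rw [hH, ← Finset.sum_erase_add univ lam (Finset.mem_univ k)]; ring
    rw [h1]
    apply Finset.sum_pos (fun i _ => hpos i)
    rw [← Finset.card_pos, Finset.card_erase_of_mem (Finset.mem_univ k),
      Finset.card_univ, Fintype.card_fin]
    omega
  -- R as a sum
  have hRsum : R = ∑ k, lam k * (H - lam k) := by
    rw [hR]
    have : H ^ 2 = ∑ k, lam k * H := by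
      rw [← Finset.sum_mul, ← hH]; ring
    rw [this, ← Finset.sum_sub_distrib]
    congr 1; funext k; ring
  have hRpos : 0 < R := by
    rw [hRsum]
    have : Nonempty (Fin n) := ⟨⟨0, by omega⟩⟩
    apply Finset.sum_pos (fun k _ => mul_pos (hpos k) (ha k))
    exact Finset.univ_nonempty
  rw [Matrix.posSemidef_iff_dotProduct_mulVec]
  constructor
  · -- Hermitian
    ext i j
    simp only [Matrix.conjTranspose_apply, Matrix.of_apply, star, id]
    by_cases h : i = j
    · subst h; simp
    · have h' : ¬ j = i := fun hc => h hc.symm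
      simp only [if_neg h, if_neg h']
      ring
  · intro x
    simp only [dotProduct, Matrix.mulVec, dotProduct, Matrix.of_apply,
      Pi.star_apply, star, id]
    -- rewrite the quadratic form
    have key : ∀ k : Fin n,
        x k * (∑ l, ((if k = l then (0:ℝ) else 1)
          - (H - lam k) * (H - lam l) / R
          + (if k = l then 2 * (H - lam k) / lam k else 0)) * x l)
        = (∑ l, (if k = l then (0:ℝ) else x k * x l))
          - ((H - lam k) * x k) * (∑ l, (H - lam l) * x l) / R
          + 2 * ((H - lam k) / lam k) * x k ^ 2 := by
      intro k
      rw [Finset.mul_sum]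
      have e1 : ∀ l : Fin n,
          x k * (((if k = l then (0:ℝ) else 1)
            - (H - lam k) * (H - lam l) / R
            + (if k = l then 2 * (H - lam k) / lam k else 0)) * x l)
          = (if k = l then (0:ℝ) else x k * x l)
            - ((H - lam k) * x k) * ((H - lam l) * x l) / R
            + (if k = l then 2 * (H - lam k) / lam k * x l * x k else 0) := by
        intro l
        by_cases h : k = l
        · subst h; simp; ring
        · simp only [if_neg h]; ring
      simp only [e1]
      rw [Finset.sum_add_distrib, Finset.sum_sub_distrib]
      congr 1
      · congr 1
        rw [Finset.mul_sum, Finset.sum_div]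
      · rw [Finset.sum_ite_eq univ k (fun l => 2 * (H - lam k) / lam k * x l * x k)]
        simp; ring
    -- name the pieces
    set A : ℝ := ∑ k, ∑ l, (if k = l then (0:ℝ) else x k * x l) with hA
    set S : ℝ := ∑ k, (H - lam k) / lam k * x k ^ 2 with hS
    set B : ℝ := (∑ k, (H - lam k) * x k) ^ 2 / R with hB
    have hQ : ∑ k, x k * (∑ l, ((if k = l then (0:ℝ) else 1)
          - (H - lam k) * (H - lam l) / R
          + (if k = l then 2 * (H - lam k) / lam k else 0)) * x l)
        = A - B + 2 * S := by
      simp only [key]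
      rw [Finset.sum_add_distrib, Finset.sum_sub_distrib]
      congr 1
      · congr 1
        rw [hB, ← Finset.sum_div]
        congr 1
        rw [sq, ← Finset.sum_mul]
      · rw [hS, Finset.mul_sum]
        congr 1; funext k; ring
    -- Cauchy-Schwarz (Sedrakyan): B ≤ S
    have hBS : B ≤ S := by
      have := Finset.sq_sum_div_le_sum_sq_div univ (fun k => (H - lam k) * x k)
        (g := fun k => lam k * (H - lam k))
        (fun k _ => mul_pos (hpos k) (ha k))
      rw [← hRsum] at this
      refine le_trans this (le_of_eq ?_)
      apply Finset.sum_congr rfl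
      intro k _
      have h1 : lam k ≠ 0 := (hpos k).ne'
      have h2 : H - lam k ≠ 0 := (ha k).ne'
      field_simp
    -- A + S ≥ 0 via symmetrization
    have hAS : 0 ≤ A + S := by
      have hsplit : ∀ (f : Fin n → ℝ) (k : Fin n),
          ∑ l, (if k = l then (0:ℝ) else f l) = (∑ l, f l) - f k := by
        intro f k
        have h0 : ∀ l, f l = (if k = l then f l else 0) + (if k = l then 0 else f l) := by
          intro l; by_cases h : k = l <;> simp [h]
        have h1 : ∑ l, f l
            = (∑ l, (if k = l then f l else 0)) + ∑ l, (if k = l then (0:ℝ) else f l) := by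
          rw [← Finset.sum_add_distrib]
          exact Finset.sum_congr rfl fun l _ => h0 l
        rw [Finset.sum_ite_eq univ k f, if_pos (Finset.mem_univ k)] at h1
        linarith
      set F : Fin n → Fin n → ℝ := fun k l =>
        if k = l then 0 else x k * x l + lam l / lam k * x k ^ 2 with hF
      have hASF : A + S = ∑ k, ∑ l, F k l := by
        rw [hA, hS, ← Finset.sum_add_distrib]
        apply Finset.sum_congr rfl
        intro k _
        have hterm : (H - lam k) / lam k * x k ^ 2
            = ∑ l, (if k = l then (0:ℝ) else lam l / lam k * x k ^ 2) := by
          rw [hsplit (fun l => lam l / lam k * x k ^ 2) k]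
          have e : ∀ l : Fin n, lam l / lam k * x k ^ 2 = lam l * (x k ^ 2 / lam k) := by
            intro l; ring
          simp only [e]
          rw [← Finset.sum_mul, ← hH]
          have : lam k ≠ 0 := (hpos k).ne'
          field_simp
        rw [hterm, ← Finset.sum_add_distrib]
        apply Finset.sum_congr rfl
        intro l _
        by_cases h : k = l <;> simp [hF, h]
      have hptwise : ∀ k l : Fin n, 0 ≤ F k l + F l k := by
        intro k l
        by_cases h : k = l
        · simp [hF, h]
        · have h' : ¬ l = k := fun hc => h hc.symm
          have hk := (hpos k).ne'
          have hl := (hpos l).ne'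
          have : F k l + F l k = (lam l * x k + lam k * x l) ^ 2 / (lam k * lam l) := by
            simp only [hF, if_neg h, if_neg h']
            field_simp
            ring
          rw [this]
          exact div_nonneg (sq_nonneg _) (mul_pos (hpos k) (hpos l)).le
      have hsym : ∑ k, ∑ l, F l k = ∑ k, ∑ l, F k l := Finset.sum_comm
      have h2 : 0 ≤ ∑ k, ∑ l, (F k l + F l k) :=
        Finset.sum_nonneg fun k _ => Finset.sum_nonneg fun l _ => hptwise k l
      have h3 : ∑ k, ∑ l, (F k l + F l k)
          = (∑ k, ∑ l, F k l) + ∑ k, ∑ l, F l k := by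
        rw [← Finset.sum_add_distrib]
        exact Finset.sum_congr rfl fun k _ => Finset.sum_add_distrib
      rw [h3, hsym] at h2
      have : 0 ≤ ∑ k, ∑ l, F k l := by linarith
      rw [hASF]; exact this
    rw [hQ]
    linarith
end

section
/- Let (Ω, μ) be a measure space and let ψ, S, k : Ω → ℝ be measurable functions that are positive μ-almost everywhere. Assume each of the four integrals ∫ ψ²/S dμ, ∫ ψ k^{−1/2} dμ, ∫ S/k dμ and ∫ ψ³ k^{1/2} S^{−2} dμ is finite. Then (∫ ψ²/S dμ) · (∫ ψ k^{−1/2} dμ) ≤ (∫ S/k dμ) · (∫ ψ³ k^{1/2} S^{−2} dμ). -/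
open MeasureTheory ENNReal

/-- Cauchy–Schwarz for integrals of nonnegative functions. -/
lemma cs_aux {Ω : Type*} [MeasurableSpace Ω] (μ : Measure Ω) {f g : Ω → ℝ}
    (hfm : AEStronglyMeasurable f μ) (hgm : AEStronglyMeasurable g μ)
    (hf0 : 0 ≤ᵐ[μ] f) (hg0 : 0 ≤ᵐ[μ] g)
    (hf2 : Integrable (fun x => f x ^ 2) μ) (hg2 : Integrable (fun x => g x ^ 2) μ) :
    (∫ x, f x * g x ∂μ) ^ 2 ≤ (∫ x, f x ^ 2 ∂μ) * (∫ x, g x ^ 2 ∂μ) := by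
  have hpq : Real.HolderConjugate 2 2 := ⟨by norm_num, by norm_num, by norm_num⟩
  have hfL : MemLp f (ENNReal.ofReal 2) μ := by
    rw [show ENNReal.ofReal 2 = (2 : ℝ≥0∞) by norm_num]
    exact (memLp_two_iff_integrable_sq hfm).2 hf2
  have hgL : MemLp g (ENNReal.ofReal 2) μ := by
    rw [show ENNReal.ofReal 2 = (2 : ℝ≥0∞) by norm_num]
    exact (memLp_two_iff_integrable_sq hgm).2 hg2
  have key := MeasureTheory.integral_mul_le_Lp_mul_Lq_of_nonneg hpq hf0 hg0 hfL hgL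
  have hf2n : 0 ≤ ∫ x, f x ^ 2 ∂μ := integral_nonneg fun x => sq_nonneg _
  have hg2n : 0 ≤ ∫ x, g x ^ 2 ∂μ := integral_nonneg fun x => sq_nonneg _
  have hfg : 0 ≤ ∫ x, f x * g x ∂μ := by
    apply integral_nonneg_of_ae
    filter_upwards [hf0, hg0] with x hx hx' using mul_nonneg hx hx'
  calc (∫ x, f x * g x ∂μ) ^ 2
      ≤ ((∫ x, f x ^ 2 ∂μ) ^ (1/2 : ℝ) * (∫ x, g x ^ 2 ∂μ) ^ (1/2 : ℝ)) ^ 2 := by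
        apply pow_le_pow_left₀ hfg
        simpa using key
    _ = (∫ x, f x ^ 2 ∂μ) * (∫ x, g x ^ 2 ∂μ) := by
        rw [mul_pow, ← Real.rpow_natCast (_ ^ (1/2:ℝ)) 2, ← Real.rpow_natCast (_ ^ (1/2:ℝ)) 2,
          ← Real.rpow_mul hf2n, ← Real.rpow_mul hg2n]
        norm_num

/-- The Hölder/Cauchy–Schwarz chain underlying the monotonicity lemma for the
normalized two-dimensional anisotropic Gauss curvature flow:
`(∫ ψ²/S)(∫ ψ k^{-1/2}) ≤ (∫ S/k)(∫ ψ³ k^{1/2} / S²)`. -/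
theorem holder_chain_monotonicity
    {Ω : Type*} [MeasurableSpace Ω] (μ : Measure Ω)
    (ψ S k : Ω → ℝ)
    (hψm : Measurable ψ) (hSm : Measurable S) (hkm : Measurable k)
    (hψ : ∀ᵐ x ∂μ, 0 < ψ x) (hS : ∀ᵐ x ∂μ, 0 < S x) (hk : ∀ᵐ x ∂μ, 0 < k x)
    (h1 : Integrable (fun x => (ψ x) ^ 2 / S x) μ)
    (h2 : Integrable (fun x => ψ x / Real.sqrt (k x)) μ)
    (h3 : Integrable (fun x => S x / k x) μ)
    (h4 : Integrable (fun x => (ψ x) ^ 3 * Real.sqrt (k x) / (S x) ^ 2) μ) :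
    (∫ x, (ψ x) ^ 2 / S x ∂μ) * (∫ x, ψ x / Real.sqrt (k x) ∂μ)
      ≤ (∫ x, S x / k x ∂μ)
        * (∫ x, (ψ x) ^ 3 * Real.sqrt (k x) / (S x) ^ 2 ∂μ) := by
  set A := ∫ x, (ψ x) ^ 2 / S x ∂μ with hA
  set B := ∫ x, ψ x / Real.sqrt (k x) ∂μ with hB
  set C := ∫ x, S x / k x ∂μ with hC
  set D := ∫ x, (ψ x) ^ 3 * Real.sqrt (k x) / (S x) ^ 2 ∂μ with hD
  have hAn : 0 ≤ A := by
    apply integral_nonneg_of_ae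
    filter_upwards [hψ, hS] with x hx hx' using div_nonneg (sq_nonneg _) hx'.le
  have hBn : 0 ≤ B := by
    apply integral_nonneg_of_ae
    filter_upwards [hψ] with x hx using div_nonneg hx.le (Real.sqrt_nonneg _)
  have hCn : 0 ≤ C := by
    apply integral_nonneg_of_ae
    filter_upwards [hS, hk] with x hx hx' using div_nonneg hx.le hx'.le
  have hDn : 0 ≤ D := by
    apply integral_nonneg_of_ae
    filter_upwards [hψ] with x hx using
      div_nonneg (mul_nonneg (by positivity) (Real.sqrt_nonneg _)) (sq_nonneg _)
  -- First CS: B² ≤ C * A, with f = √(S/k), g = ψ/√S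
  have hBCA : B ^ 2 ≤ C * A := by
    have hfm : AEStronglyMeasurable (fun x => Real.sqrt (S x / k x)) μ :=
      ((hSm.div hkm).sqrt).aestronglyMeasurable
    have hgm : AEStronglyMeasurable (fun x => ψ x / Real.sqrt (S x)) μ :=
      (hψm.div hSm.sqrt).aestronglyMeasurable
    have hf0 : 0 ≤ᵐ[μ] (fun x => Real.sqrt (S x / k x)) :=
      Filter.Eventually.of_forall fun x => Real.sqrt_nonneg _
    have hg0 : 0 ≤ᵐ[μ] (fun x => ψ x / Real.sqrt (S x)) := by
      filter_upwards [hψ] with x hx using div_nonneg hx.le (Real.sqrt_nonneg _)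
    have hf2 : Integrable (fun x => Real.sqrt (S x / k x) ^ 2) μ := by
      apply h3.congr
      filter_upwards [hS, hk] with x hx hx'
      rw [Real.sq_sqrt (div_nonneg hx.le hx'.le)]
    have hg2 : Integrable (fun x => (ψ x / Real.sqrt (S x)) ^ 2) μ := by
      apply h1.congr
      filter_upwards [hS] with x hx
      rw [div_pow, Real.sq_sqrt hx.le]
    have key := cs_aux μ hfm hgm hf0 hg0 hf2 hg2
    have e1 : (∫ x, Real.sqrt (S x / k x) * (ψ x / Real.sqrt (S x)) ∂μ) = B := by
      apply integral_congr_ae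
      filter_upwards [hψ, hS, hk] with x hx hx' hx''
      have hsS : (0:ℝ) < Real.sqrt (S x) := Real.sqrt_pos.2 hx'
      have hsk : (0:ℝ) < Real.sqrt (k x) := Real.sqrt_pos.2 hx''
      rw [Real.sqrt_div hx'.le]
      field_simp
    have e2 : (∫ x, Real.sqrt (S x / k x) ^ 2 ∂μ) = C :=
      integral_congr_ae <| by
        filter_upwards [hS, hk] with x hx hx'
        rw [Real.sq_sqrt (div_nonneg hx.le hx'.le)]
    have e3 : (∫ x, (ψ x / Real.sqrt (S x)) ^ 2 ∂μ) = A :=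
      integral_congr_ae <| by
        filter_upwards [hS] with x hx
        rw [div_pow, Real.sq_sqrt hx.le]
    rwa [e1, e2, e3] at key
  -- Second CS: A² ≤ B * D, with f = √(ψ/√k), g = √(ψ³√k/S²)
  have hABD : A ^ 2 ≤ B * D := by
    have hfm : AEStronglyMeasurable (fun x => Real.sqrt (ψ x / Real.sqrt (k x))) μ :=
      ((hψm.div hkm.sqrt).sqrt).aestronglyMeasurable
    have hgm : AEStronglyMeasurable
        (fun x => Real.sqrt ((ψ x) ^ 3 * Real.sqrt (k x) / (S x) ^ 2)) μ :=
      (((hψm.pow_const 3).mul hkm.sqrt).div (hSm.pow_const 2)).sqrt.aestronglyMeasurable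
    have hf0 : 0 ≤ᵐ[μ] (fun x => Real.sqrt (ψ x / Real.sqrt (k x))) :=
      Filter.Eventually.of_forall fun x => Real.sqrt_nonneg _
    have hg0 : 0 ≤ᵐ[μ] (fun x => Real.sqrt ((ψ x) ^ 3 * Real.sqrt (k x) / (S x) ^ 2)) :=
      Filter.Eventually.of_forall fun x => Real.sqrt_nonneg _
    have hf2 : Integrable (fun x => Real.sqrt (ψ x / Real.sqrt (k x)) ^ 2) μ := by
      apply h2.congr
      filter_upwards [hψ] with x hx
      rw [Real.sq_sqrt (div_nonneg hx.le (Real.sqrt_nonneg _))]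
    have hg2 : Integrable
        (fun x => Real.sqrt ((ψ x) ^ 3 * Real.sqrt (k x) / (S x) ^ 2) ^ 2) μ := by
      apply h4.congr
      filter_upwards [hψ] with x hx
      rw [Real.sq_sqrt (div_nonneg (mul_nonneg (by positivity) (Real.sqrt_nonneg _))
        (sq_nonneg _))]
    have key := cs_aux μ hfm hgm hf0 hg0 hf2 hg2
    have e1 : (∫ x, Real.sqrt (ψ x / Real.sqrt (k x))
        * Real.sqrt ((ψ x) ^ 3 * Real.sqrt (k x) / (S x) ^ 2) ∂μ) = A := by
      apply integral_congr_ae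
      filter_upwards [hψ, hS, hk] with x hx hx' hx''
      have hsk : (0:ℝ) < Real.sqrt (k x) := Real.sqrt_pos.2 hx''
      rw [← Real.sqrt_mul (div_nonneg hx.le hsk.le),
        show ψ x / Real.sqrt (k x) * ((ψ x) ^ 3 * Real.sqrt (k x) / (S x) ^ 2)
          = ((ψ x) ^ 2 / S x) ^ 2 by field_simp,
        Real.sqrt_sq (div_nonneg (sq_nonneg _) hx'.le)]
    have e2 : (∫ x, Real.sqrt (ψ x / Real.sqrt (k x)) ^ 2 ∂μ) = B :=
      integral_congr_ae <| by
        filter_upwards [hψ] with x hx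
        rw [Real.sq_sqrt (div_nonneg hx.le (Real.sqrt_nonneg _))]
    have e3 : (∫ x, Real.sqrt ((ψ x) ^ 3 * Real.sqrt (k x) / (S x) ^ 2) ^ 2 ∂μ) = D :=
      integral_congr_ae <| by
        filter_upwards [hψ] with x hx
        rw [Real.sq_sqrt (div_nonneg (mul_nonneg (by positivity) (Real.sqrt_nonneg _))
          (sq_nonneg _))]
    rwa [e1, e2, e3] at key
  -- Algebra: A² ≤ BD, B² ≤ CA, all nonneg ⇒ AB ≤ CD
  have key : A * B * (A * B) ≤ C * D * (A * B) := by
    nlinarith [mul_le_mul hABD hBCA (sq_nonneg B) (mul_nonneg hBn hDn)]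
  rcases (mul_nonneg hAn hBn).eq_or_lt with h | h
  · rw [← h]; exact mul_nonneg hCn hDn
  · exact le_of_mul_le_mul_right key h
end
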